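/- Let G be a finite group (or a finite subset F of a discrete group G with n = |F|), A a von Neumann algebra, β : G → Aut(A) an action implemented by unitaries u(g). Then the map ψ_F : A ⊗ M_n → B (where B is the von Neumann algebra generated by A and the u(g)) defined on matrix units by ψ_F(y ⊗ e_{f,h}) = |F|^{-1} β_f(y) u(f h^{-1}), for f, h ∈ F, is unital and completely positive. -/

import Mathlib

set_option synthInstance.maxHeartbeats 1000000
set_option maxHeartbeats 2000000
set_option linter.unusedSectionVars false

/-- Complete positivity (for a not-necessarily-linear map we ask positivity of all matrix
amplifications) over matrices indexed by arbitrary finite types. -/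
def IsCompletelyPositiveFun {A B : Type*} [Ring A] [StarRing A] [Ring B] [StarRing B]
    (φ : A → B) : Prop :=
  ∀ (ι : Type) (_ : Fintype ι) (_ : DecidableEq ι) (x : Matrix ι ι A),
    (∃ b : Matrix ι ι A, x = star b * b) → ∃ c : Matrix ι ι B, x.map φ = star c * c

/-- The map `ψ_F : B(K) ⊗ M_F → B(K)`, `ψ_F(Y) = |F|⁻¹ ∑_{f,h ∈ F} u(f) Y_{f,h} u(h)*`,
which on matrix units is `ψ_F(y ⊗ e_{f,h}) = |F|⁻¹ β_f(y) u(f h⁻¹)` where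
`β_g = Ad u(g)`. -/
noncomputable def psiF {G : Type*} [Group G] [DecidableEq G] {K : Type*}
    [NormedAddCommGroup K] [InnerProductSpace ℂ K] [CompleteSpace K]
    (u : G → (K →L[ℂ] K)) (F : Finset G)
    (Y : Matrix F F (K →L[ℂ] K)) : K →L[ℂ] K :=
  ((F.card : ℂ))⁻¹ • ∑ f : F, ∑ h : F, u f * Y f h * star (u h)

section PhiAux

variable {K : Type*} [NormedAddCommGroup K] [InnerProductSpace ℂ K] [CompleteSpace K]
variable (ι : Type) [Fintype ι] [DecidableEq ι]

noncomputable instance PiLpComplete : CompleteSpace (PiLp 2 (fun _ : ι => K)) := inferInstance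

/-- The standard identification of matrices over `B(K)` with operators on `K^ι` (with `ℓ²` norm). -/
noncomputable def PhiAux (M : Matrix ι ι (K →L[ℂ] K)) :
    PiLp 2 (fun _ : ι => K) →L[ℂ] PiLp 2 (fun _ : ι => K) :=
  ((PiLp.continuousLinearEquiv 2 ℂ (fun _ : ι => K)).symm :
      (∀ _ : ι, K) →L[ℂ] PiLp 2 (fun _ : ι => K)) ∘L
    (ContinuousLinearMap.pi fun i => ∑ j, (M i j) ∘L ContinuousLinearMap.proj j) ∘L
    ((PiLp.continuousLinearEquiv 2 ℂ (fun _ : ι => K)) :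
      PiLp 2 (fun _ : ι => K) →L[ℂ] (∀ _ : ι, K))

variable {ι}

lemma PhiAux_apply (M : Matrix ι ι (K →L[ℂ] K)) (v : PiLp 2 (fun _ : ι => K)) (i : ι) :
    PhiAux ι M v i = ∑ j, M i j (v j) := by
  simp [PhiAux, ContinuousLinearMap.sum_apply]

lemma PhiAux_add (M N : Matrix ι ι (K →L[ℂ] K)) :
    PhiAux ι (M + N) = PhiAux ι M + PhiAux ι N := by
  ext v i
  simp [PhiAux_apply, Matrix.add_apply, Finset.sum_add_distrib]

lemma PhiAux_zero : PhiAux ι (0 : Matrix ι ι (K →L[ℂ] K)) = 0 := by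
  ext v i
  simp [PhiAux_apply]

lemma PhiAux_sum {κ : Type*} (s : Finset κ) (M : κ → Matrix ι ι (K →L[ℂ] K)) :
    PhiAux ι (∑ k ∈ s, M k) = ∑ k ∈ s, PhiAux ι (M k) := by
  classical
  induction s using Finset.induction_on with
  | empty => simpa using PhiAux_zero
  | insert _ _ hns ih =>
      rw [Finset.sum_insert hns, Finset.sum_insert hns, PhiAux_add, ih]

lemma PhiAux_mul (M N : Matrix ι ι (K →L[ℂ] K)) :
    PhiAux ι (M * N) = PhiAux ι M * PhiAux ι N := by
  ext v i
  show PhiAux ι (M * N) v i = PhiAux ι M (PhiAux ι N v) i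
  simp only [PhiAux_apply, Matrix.mul_apply, ContinuousLinearMap.sum_apply, map_sum,
    ContinuousLinearMap.mul_apply, Finset.sum_apply]
  rw [Finset.sum_comm]

lemma PhiAux_star (M : Matrix ι ι (K →L[ℂ] K)) :
    PhiAux ι (star M) = star (PhiAux ι M) := by
  rw [ContinuousLinearMap.star_eq_adjoint]
  rw [ContinuousLinearMap.eq_adjoint_iff]
  intro v w
  simp only [PiLp.inner_apply, PhiAux_apply]
  simp only [inner_sum, sum_inner]
  rw [Finset.sum_comm]
  refine Finset.sum_congr rfl fun i _ => Finset.sum_congr rfl fun j _ => ?_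
  rw [Matrix.star_apply, ContinuousLinearMap.star_eq_adjoint,
    ContinuousLinearMap.adjoint_inner_left]

lemma PhiAux_injective : Function.Injective (PhiAux (K := K) ι) := by
  intro M N hMN
  ext i j x
  have h := congrArg (fun T => T ((WithLp.equiv 2 (∀ _ : ι, K)).symm (Pi.single j x)) i) hMN
  simpa [PhiAux_apply, Pi.single_apply, apply_ite, Finset.sum_ite_eq'] using h

/-- Inverse of `PhiAux`. -/
noncomputable def PsiAux (T : PiLp 2 (fun _ : ι => K) →L[ℂ] PiLp 2 (fun _ : ι => K)) :
    Matrix ι ι (K →L[ℂ] K) := fun i j =>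
  (ContinuousLinearMap.proj i) ∘L
    (((PiLp.continuousLinearEquiv 2 ℂ (fun _ : ι => K)) :
        PiLp 2 (fun _ : ι => K) →L[ℂ] (∀ _ : ι, K)) ∘L T ∘L
      ((PiLp.continuousLinearEquiv 2 ℂ (fun _ : ι => K)).symm :
        (∀ _ : ι, K) →L[ℂ] PiLp 2 (fun _ : ι => K))) ∘L
    (ContinuousLinearMap.pi fun p => if p = j then ContinuousLinearMap.id ℂ K else 0)

lemma PhiAux_PsiAux (T : PiLp 2 (fun _ : ι => K) →L[ℂ] PiLp 2 (fun _ : ι => K)) :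
    PhiAux ι (PsiAux T) = T := by
  ext v i
  have hv : ∑ j, (WithLp.equiv 2 (∀ _ : ι, K)).symm (Pi.single j (v j)) = v := by
    refine PiLp.ext fun p => ?_
    have : (∑ j, (WithLp.equiv 2 (∀ _ : ι, K)).symm (Pi.single j (v j))) p
        = ∑ j, Pi.single j (v j) p := by
      rw [WithLp.ofLp_sum]; exact Finset.sum_apply p Finset.univ _
    rw [this]
    simp [Pi.single_apply]
  calc PhiAux ι (PsiAux T) v i
      = ∑ j, T ((WithLp.equiv 2 (∀ _ : ι, K)).symm (Pi.single j (v j))) i := by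
        simp only [PhiAux_apply, PsiAux, ContinuousLinearMap.comp_apply,
          ContinuousLinearMap.proj_apply, ContinuousLinearMap.pi_apply]
        refine Finset.sum_congr rfl fun j _ => ?_
        show T ((WithLp.equiv 2 (∀ _ : ι, K)).symm
            (ContinuousLinearMap.pi (fun p => if p = j then ContinuousLinearMap.id ℂ K else 0)
              (v j))) i = _
        have harg : (ContinuousLinearMap.pi
            (fun p => if p = j then ContinuousLinearMap.id ℂ K else 0)) (v j)
            = Pi.single j (v j) := by
          funext p
          by_cases hp : p = j <;> simp [ContinuousLinearMap.pi_apply, hp, Pi.single_apply]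
        rw [harg]
    _ = (∑ j, T ((WithLp.equiv 2 (∀ _ : ι, K)).symm (Pi.single j (v j)))) i := by
        rw [WithLp.ofLp_sum]; exact (Finset.sum_apply i Finset.univ _).symm
    _ = T v i := by rw [← map_sum, hv]

end PhiAux

section PsiFLemmas

variable {G : Type*} [Group G] [DecidableEq G] {K : Type*}
    [NormedAddCommGroup K] [InnerProductSpace ℂ K] [CompleteSpace K]
    (u : G → (K →L[ℂ] K)) (F : Finset G)

private lemma sum_rot3 {β : Type*} [AddCommMonoid β] {α1 α2 α3 : Type*}
    [Fintype α1] [Fintype α2] [Fintype α3] (X : α1 → α2 → α3 → β) :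
    ∑ f, ∑ h, ∑ g, X f h g = ∑ g, ∑ f, ∑ h, X f h g := by
  rw [show (∑ f, ∑ h, ∑ g, X f h g) = ∑ f, ∑ g, ∑ h, X f h g from
    Finset.sum_congr rfl fun f _ => Finset.sum_comm]
  exact Finset.sum_comm

lemma psiF_add (Y Z : Matrix F F (K →L[ℂ] K)) :
    psiF u F (Y + Z) = psiF u F Y + psiF u F Z := by
  simp [psiF, Matrix.add_apply, mul_add, add_mul, Finset.sum_add_distrib, smul_add]

lemma psiF_smul (c : ℂ) (Y : Matrix F F (K →L[ℂ] K)) :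
    psiF u F (c • Y) = c • psiF u F Y := by
  simp only [psiF, Matrix.smul_apply, smul_mul_assoc, mul_smul_comm, ← Finset.smul_sum]
  rw [smul_comm]

lemma psiF_linear : IsLinearMap ℂ (psiF u F) := ⟨psiF_add u F, psiF_smul u F⟩

lemma psiF_sum {κ : Type*} (s : Finset κ) (M : κ → Matrix F F (K →L[ℂ] K)) :
    psiF u F (∑ k ∈ s, M k) = ∑ k ∈ s, psiF u F (M k) :=
  map_sum (IsLinearMap.mk' _ (psiF_linear u F)) M s

/-- The `g`-th row operator `∑_h a_{g h} u(h)*`. -/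
noncomputable def Trow (a : Matrix F F (K →L[ℂ] K)) (g : F) : K →L[ℂ] K :=
  ∑ h : F, a g h * star (u h)

lemma star_Trow (a : Matrix F F (K →L[ℂ] K)) (g : F) :
    star (Trow u F a g) = ∑ f : F, u f * star (a g f) := by
  simp [Trow, star_sum, star_mul]

lemma psiF_star_mul (a d : Matrix F F (K →L[ℂ] K)) :
    psiF u F (star a * d)
      = ((F.card : ℂ))⁻¹ • ∑ g : F, star (Trow u F a g) * Trow u F d g := by
  have key : ∀ (f h : F), u ↑f * ((star a * d) f h) * star (u ↑h)
      = ∑ g : F, u ↑f * (star (a g f) * d g h) * star (u ↑h) := by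
    intro f h
    simp [Matrix.mul_apply, Matrix.star_apply, Finset.mul_sum, Finset.sum_mul]
  rw [psiF]
  simp only [key]
  rw [sum_rot3]
  congr 1
  refine Finset.sum_congr rfl fun g _ => ?_
  rw [star_Trow, Trow, Finset.sum_mul]
  refine Finset.sum_congr rfl fun f _ => ?_
  rw [Finset.mul_sum]
  refine Finset.sum_congr rfl fun h _ => ?_
  simp [mul_assoc]

lemma psiF_cp_aux {ι : Type} [Fintype ι] [DecidableEq ι]
    (x : Matrix ι ι (Matrix F F (K →L[ℂ] K)))
    (hx : ∃ b : Matrix ι ι (Matrix F F (K →L[ℂ] K)), x = star b * b) :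
    ∃ c : Matrix ι ι (K →L[ℂ] K), x.map (psiF u F) = star c * c := by
  obtain ⟨b, hb⟩ := hx
  set z : ℂ := ((Real.sqrt ((F.card : ℝ)⁻¹) : ℝ) : ℂ) with hz
  have hzz : z * z = ((F.card : ℂ))⁻¹ := by
    have h1 : Real.sqrt ((F.card : ℝ)⁻¹) * Real.sqrt ((F.card : ℝ)⁻¹) = (F.card : ℝ)⁻¹ :=
      Real.mul_self_sqrt (by positivity)
    calc z * z = ((Real.sqrt ((F.card : ℝ)⁻¹) * Real.sqrt ((F.card : ℝ)⁻¹) : ℝ) : ℂ) := by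
          push_cast; ring
      _ = (((F.card : ℝ)⁻¹ : ℝ) : ℂ) := by rw [h1]
      _ = ((F.card : ℂ))⁻¹ := by push_cast; ring
  have hstarz : star z = z := by rw [hz, RCLike.star_def, Complex.conj_ofReal]
  set R : ι × F → Matrix ι ι (K →L[ℂ] K) :=
    fun m => fun p j => if p = m.1 then z • Trow u F (b m.1 j) m.2 else 0 with hR
  have hfact : x.map (psiF u F) = ∑ m : ι × F, star (R m) * R m := by
    refine Matrix.ext fun i j => ?_
    rw [Matrix.map_apply]
    have hxij : x i j = ∑ k, star (b k i) * b k j := by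
      rw [hb, Matrix.mul_apply]
      exact Finset.sum_congr rfl fun k _ => by rw [Matrix.star_apply]
    rw [hxij, psiF_sum, Matrix.sum_apply, Fintype.sum_prod_type]
    refine Finset.sum_congr rfl fun k _ => ?_
    rw [psiF_star_mul, Finset.smul_sum]
    refine Finset.sum_congr rfl fun g _ => ?_
    rw [Matrix.mul_apply]
    have hterm : ∀ p : ι, (star (R (k, g))) i p * R (k, g) p j
        = if p = k then (z • star (Trow u F (b k i) g)) * (z • Trow u F (b k j) g)
          else 0 := by
      intro p
      by_cases hp : p = k <;> rw [Matrix.star_apply] <;>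
        simp [hR, Matrix.star_apply, hp, star_smul, hstarz]
    simp only [hterm]
    rw [Finset.sum_ite_eq' Finset.univ k _, if_pos (Finset.mem_univ k),
      smul_mul_smul_comm, hzz]
  set P := PhiAux ι (x.map (psiF u F)) with hPdef
  have hP : (0 : PiLp 2 (fun _ : ι => K) →L[ℂ] PiLp 2 (fun _ : ι => K)) ≤ P := by
    have hPsum : P = ∑ m : ι × F, star (PhiAux ι (R m)) * PhiAux ι (R m) := by
      rw [hPdef, hfact, PhiAux_sum]
      exact Finset.sum_congr rfl fun m _ => by rw [PhiAux_mul, PhiAux_star]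
    rw [hPsum]
    exact Finset.sum_nonneg fun m _ => star_mul_self_nonneg _
  refine ⟨PsiAux (CFC.sqrt P), ?_⟩
  apply PhiAux_injective
  rw [PhiAux_mul, PhiAux_star, PhiAux_PsiAux]
  have hsa : IsSelfAdjoint (CFC.sqrt P) := IsSelfAdjoint.of_nonneg (CFC.sqrt_nonneg P)
  rw [hsa.star_eq, CFC.sqrt_mul_sqrt_self P hP]

end PsiFLemmas

/-- If `u : G → U(K)` is a unitary representation implementing the action `β_g = Ad u(g)`
and `F ⊆ G` is finite and nonempty, then the map
`ψ_F : M_F(B(K)) → B(K)` given on matrix units by `ψ_F(y ⊗ e_{f,h}) = |F|⁻¹ β_f(y) u(f h⁻¹)`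
is linear, unital, and completely positive. -/
theorem psiF_is_unital_completely_positive
    {G : Type*} [Group G] [DecidableEq G] {K : Type*}
    [NormedAddCommGroup K] [InnerProductSpace ℂ K] [CompleteSpace K]
    (u : G → (K →L[ℂ] K))
    (humul : ∀ g h : G, u (g * h) = u g * u h)
    (hustar : ∀ g : G, star (u g) = u g⁻¹)
    (huunit : ∀ g : G, u g * star (u g) = 1 ∧ star (u g) * u g = 1)
    (F : Finset G) (hF : F.Nonempty) :
    IsLinearMap ℂ (psiF u F) ∧
    psiF u F 1 = 1 ∧
    IsCompletelyPositiveFun (psiF u F) ∧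
    (∀ (y : K →L[ℂ] K) (f h : F),
      psiF u F (Matrix.single f h y)
        = ((F.card : ℂ))⁻¹ • (u f * y * star (u f) * u ((f : G) * (h : G)⁻¹))) := by
  have hn : (F.card : ℂ) ≠ 0 := Nat.cast_ne_zero.2 hF.card_pos.ne'
  refine ⟨psiF_linear u F, ?_, ?_, ?_⟩
  · -- unitality
    rw [psiF]
    have key : ∀ f : F, ∑ h : F, u ↑f * (1 : Matrix F F (K →L[ℂ] K)) f h * star (u ↑h)
        = 1 := by
      intro f
      rw [Finset.sum_eq_single f]
      · simpa [Matrix.one_apply] using (huunit (f : G)).1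
      · intro h _ hne
        simp [Matrix.one_apply_ne (Ne.symm hne)]
      · intro hf; exact absurd (Finset.mem_univ f) hf
    simp only [key]
    rw [Finset.sum_const, Finset.card_univ, Fintype.card_coe,
      ← Nat.cast_smul_eq_nsmul ℂ, smul_smul, inv_mul_cancel₀ hn, one_smul]
  · -- complete positivity
    intro ι hFin hDec x hx
    exact @psiF_cp_aux G _ _ K _ _ _ u F ι hFin hDec x hx
  · -- action on matrix units
    intro y f h
    rw [psiF]
    congr 1
    rw [Finset.sum_eq_single f]
    · rw [Finset.sum_eq_single h]
      · rw [Matrix.single_apply_same]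
        rw [hustar, hustar, mul_assoc (u ↑f * y), ← humul, inv_mul_cancel_left]
      · intro h' _ hne
        simp only [Matrix.single_apply_of_ne f h y f h' (by tauto), mul_zero, zero_mul]
      · intro hh; exact absurd (Finset.mem_univ h) hh
    · intro f' _ hne
      refine Finset.sum_eq_zero fun h' _ => ?_
      simp only [Matrix.single_apply_of_ne f h y f' h' (by tauto), mul_zero, zero_mul]
    · intro hf; exact absurd (Finset.mem_univ f) hf
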